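/- In any group G satisfying [G'', G, G] = 1, for all u, v, w in the derived subgroup G', we have [u^v, w] = [u, w], where u^v = v⁻¹uv. -/

import Mathlib

open scoped commutatorElement

theorem stmt3 {G : Type*} [Group G]
    (h : ⁅⁅derivedSeries G 2, (⊤ : Subgroup G)⁆, (⊤ : Subgroup G)⁆ = (⊥ : Subgroup G))
    (u v w : G) (hu : u ∈ derivedSeries G 1) (hv : v ∈ derivedSeries G 1)
    (hw : w ∈ derivedSeries G 1) :
    ⁅v⁻¹ * u * v, w⁆ = ⁅u, w⁆ := by
  -- elements of [G'',G] are central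
  have central : ∀ c ∈ derivedSeries G 2, ∀ g x : G, Commute ⁅c, g⁆ x := by
    intro c hc g x
    rw [← commutatorElement_eq_one_iff_commute, ← Subgroup.mem_bot, ← h]
    exact Subgroup.commutator_mem_commutator
      (Subgroup.commutator_mem_commutator hc (Subgroup.mem_top g)) (Subgroup.mem_top x)
  -- [G'', G'] = 1
  have key : ∀ c ∈ derivedSeries G 2, ∀ z ∈ derivedSeries G 1, ⁅c, z⁆ = 1 := by
    intro c hc z hz
    have mem : ∀ g : G, ⁅c, g⁆ ∈ Subgroup.center G := by
      intro g
      rw [Subgroup.mem_center_iff]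
      intro x
      exact (central c hc g x).symm
    let f : G →* Subgroup.center G :=
      { toFun := fun g => ⟨⁅c, g⁆, mem g⟩
        map_one' := by ext; simp
        map_mul' := by
          intro a b
          ext
          show ⁅c, a * b⁆ = ⁅c, a⁆ * ⁅c, b⁆
          have h1 : a * ⁅c, b⁆ * a⁻¹ = ⁅c, b⁆ := by
            rw [((central c hc b a).symm).eq]; group
          calc ⁅c, a * b⁆ = ⁅c, a⁆ * (a * ⁅c, b⁆ * a⁻¹) := by
                simp only [commutatorElement_def]; group
            _ = ⁅c, a⁆ * ⁅c, b⁆ := by rw [h1] }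
    have hk : z ∈ f.ker := by
      have hz' : z ∈ commutator G := by rwa [← derivedSeries_one]
      rw [commutator_eq_closure] at hz'
      refine (Subgroup.closure_le _).mpr ?_ hz'
      rintro x ⟨p, q, rfl⟩
      rw [SetLike.mem_coe, MonoidHom.mem_ker, map_commutatorElement, commutatorElement_eq_one_iff_commute]
      exact Subtype.ext (Subgroup.mem_center_iff.mp (f q).2 (f p))
    exact congrArg Subtype.val (MonoidHom.mem_ker.mp hk)
  set c := ⁅u⁻¹, v⁻¹⁆ with hc
  have hc2 : c ∈ derivedSeries G 2 := by
    rw [derivedSeries_succ]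
    exact Subgroup.commutator_mem_commutator ((derivedSeries G 1).inv_mem hu)
      ((derivedSeries G 1).inv_mem hv)
  have hcw : Commute c w := commutatorElement_eq_one_iff_commute.mp (key c hc2 w hw)
  have e1 : v⁻¹ * u * v = u * c := by rw [hc]; simp only [commutatorElement_def]; group
  have h2 : c * w * c⁻¹ = w := by rw [hcw.eq]; group
  calc ⁅v⁻¹ * u * v, w⁆ = ⁅u * c, w⁆ := by rw [e1]
    _ = u * (c * w * c⁻¹) * u⁻¹ * w⁻¹ := by simp only [commutatorElement_def]; group
    _ = u * w * u⁻¹ * w⁻¹ := by rw [h2]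
    _ = ⁅u, w⁆ := by rw [commutatorElement_def]
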